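/- (Cancellation Lemma) Let f : ℝ × ℝ → ℝ be continuous and 1-periodic in the time variable. If the equation x' = f(t,x) admits a solution u with u(t+m) = u(t) for all t ∈ ℝ for some integer m ≥ 3, and u is not 1-periodic (there exists t* with u(t*+1) ≠ u(t*)), then the equation also admits a solution v with v(t+2) = v(t) for all t ∈ ℝ which is not 1-periodic (there exists s with v(s+1) ≠ v(s)). -/

import Mathlib

open Set

/-- `x` is a (classical) solution of the ODE `x' = f(t,x)` on the whole real line. -/
def IsSolution (f : ℝ × ℝ → ℝ) (x : ℝ → ℝ) : Prop :=
  ∀ t : ℝ, HasDerivAt x (f (t, x t)) t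

lemma f_int_per (f : ℝ × ℝ → ℝ) (hper : ∀ t x : ℝ, f (t + 1, x) = f (t, x)) :
    ∀ (j : ℤ) (t x : ℝ), f (t + (j : ℝ), x) = f (t, x) := by
  intro j
  induction j using Int.induction_on with
  | zero => simp
  | succ k ih =>
      intro t x
      have h1 : t + ((k : ℤ) + 1 : ℤ) = (t + (k : ℤ)) + 1 := by push_cast; ring
      rw [h1, hper, ih]
  | pred k ih =>
      intro t x
      have h1 : (t + (-(k : ℤ) - 1 : ℤ)) + 1 = t + (-(k : ℤ) : ℤ) := by push_cast; ring
      have h2 := hper (t + (-(k : ℤ) - 1 : ℤ)) x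
      rw [h1] at h2
      rw [← h2, ih]

lemma sol_shift (f : ℝ × ℝ → ℝ) (hper : ∀ t x : ℝ, f (t + 1, x) = f (t, x))
    (u : ℝ → ℝ) (hu : IsSolution f u) (j : ℤ) (t : ℝ) :
    HasDerivAt (fun s => u (s + (j : ℝ))) (f (t, u (t + (j : ℝ)))) t := by
  have h := hu (t + (j : ℝ))
  have hid : HasDerivAt (fun s : ℝ => s + (j : ℝ)) 1 t := (hasDerivAt_id t).add_const _
  have h2 := HasDerivAt.comp t h hid
  simpa [Function.comp_def, f_int_per f hper j t] using h2

lemma construct_w (f : ℝ × ℝ → ℝ)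
    (hper : ∀ t x : ℝ, f (t + 1, x) = f (t, x))
    (u : ℝ → ℝ) (n : ℕ) (hn : 2 ≤ n)
    (hu : IsSolution f u)
    (hunR : ∀ t : ℝ, u (t + ((n:ℝ) + 1)) = u t)
    (M τ : ℝ) (hgM : u (M + 1) = u M) (hτ1 : M + 1 ≤ τ) (hτ2 : τ ≤ M + (n:ℝ))
    (hgτ : u (τ + 1) ≠ u τ) :
    ∃ w : ℝ → ℝ, IsSolution f w ∧ (∀ t : ℝ, w (t + (n : ℕ)) = w t) ∧
      ∃ s : ℝ, w (s + 1) ≠ w s := by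
  have hP : (0:ℝ) < (n:ℝ) := by
    have : 0 < n := by omega
    exact_mod_cast this
  have hP2 : (2:ℝ) ≤ (n:ℝ) := by exact_mod_cast hn
  set w : ℝ → ℝ := fun t => u (t + ((1 - (n:ℤ) * ⌊(t - M) / (n:ℝ)⌋ : ℤ) : ℝ)) with hw
  -- floor characterization
  have hfloor : ∀ (t : ℝ) (k : ℤ), M + (k:ℝ) * (n:ℝ) ≤ t → t < M + ((k:ℝ)+1) * (n:ℝ) →
      ⌊(t - M) / (n:ℝ)⌋ = k := by
    intro t k h1 h2
    rw [Int.floor_eq_iff]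
    constructor
    · rw [le_div_iff₀ hP]; linarith
    · rw [div_lt_iff₀ hP]; linarith
  have hwval : ∀ (t : ℝ) (k : ℤ), ⌊(t - M) / (n:ℝ)⌋ = k →
      w t = u (t + ((1 - (n:ℤ) * k : ℤ) : ℝ)) := by
    intro t k hk
    simp only [hw, hk]
  -- floor bounds
  have hbounds : ∀ t : ℝ, M + (⌊(t - M) / (n:ℝ)⌋ : ℝ) * (n:ℝ) ≤ t ∧
      t < M + ((⌊(t - M) / (n:ℝ)⌋ : ℝ) + 1) * (n:ℝ) := by
    intro t
    constructor
    · have := Int.floor_le ((t - M) / (n:ℝ))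
      rw [le_div_iff₀ hP] at this
      linarith
    · have := Int.lt_floor_add_one ((t - M) / (n:ℝ))
      rw [div_lt_iff₀ hP] at this
      linarith
  refine ⟨w, ?_, ?_, ?_⟩
  · -- IsSolution
    intro t
    set k : ℤ := ⌊(t - M) / (n:ℝ)⌋ with hk
    obtain ⟨hb1, hb2⟩ := hbounds t
    rw [← hk] at hb1 hb2
    have hwt : w t = u (t + ((1 - (n:ℤ) * k : ℤ) : ℝ)) := hwval t k hk.symm
    rcases eq_or_lt_of_le hb1 with heq | hlt
    · -- junction point : t = M + k * n
      have htM : t = M + (k:ℝ) * (n:ℝ) := heq.symm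
      have hwtM : w t = u (M + 1) := by
        rw [hwt]
        congr 1
        push_cast
        rw [htM]; ring
      have huM2 : u (M + ((n:ℝ)+1)) = u M := hunR M
      -- right side
      have hright : HasDerivWithinAt w (f (t, w t)) (Ici t) t := by
        have hr := (sol_shift f hper u hu (1 - (n:ℤ) * k) t).hasDerivWithinAt (s := Ici t)
        have hmem : Ico t (M + ((k:ℝ)+1) * (n:ℝ)) ∈ nhdsWithin t (Ici t) :=
          Ico_mem_nhdsGE_of_mem ⟨le_refl t, hb2⟩
        have hev : ∀ᶠ s in nhdsWithin t (Ici t), w s = u (s + ((1 - (n:ℤ) * k : ℤ) : ℝ)) := by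
          filter_upwards [hmem] with s hs
          exact hwval s k (hfloor s k (hb1.trans hs.1) hs.2)
        have h2 := hr.congr_of_eventuallyEq hev (hwt)
        rwa [← hwt] at h2
      -- left side
      have hleft : HasDerivWithinAt w (f (t, w t)) (Iic t) t := by
        have hl := (sol_shift f hper u hu (1 - (n:ℤ) * (k-1)) t).hasDerivWithinAt (s := Iic t)
        have hlow : M + ((k:ℝ)-1) * (n:ℝ) < t := by rw [htM]; nlinarith
        have hmem : Ioc (M + ((k:ℝ)-1) * (n:ℝ)) t ∈ nhdsWithin t (Iic t) :=
          Ioc_mem_nhdsLE hlow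
        have hveq : w t = u (t + ((1 - (n:ℤ) * (k-1) : ℤ) : ℝ)) := by
          rw [hwtM]
          have harg : t + ((1 - (n:ℤ) * (k-1) : ℤ) : ℝ) = M + 1 + ((n:ℝ) + 1) - 1 := by
            push_cast; rw [htM]; ring
          rw [harg]
          have : M + 1 + ((n:ℝ) + 1) - 1 = (M + 1 - 1) + ((n:ℝ)+1) + 0 := by ring
          rw [show M + 1 + ((n:ℝ) + 1) - 1 = M + ((n:ℝ)+1) + 1 - 1 by ring]
          rw [show M + ((n:ℝ)+1) + 1 - 1 = M + ((n:ℝ)+1) by ring]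
          rw [huM2, hgM]
        have hev : ∀ᶠ s in nhdsWithin t (Iic t), w s = u (s + ((1 - (n:ℤ) * (k-1) : ℤ) : ℝ)) := by
          filter_upwards [hmem] with s hs
          rcases lt_or_eq_of_le hs.2 with hlt' | heq'
          · refine hwval s (k-1) (hfloor s (k-1) ?_ ?_)
            · push_cast; exact hs.1.le
            · push_cast
              rw [htM] at hlt'
              linarith
          · rw [heq', hveq]
        have h2 := hl.congr_of_eventuallyEq hev hveq
        rwa [← hveq] at h2
      have := hleft.union hright
      rw [Iic_union_Ici] at this
      exact hasDerivWithinAt_univ.mp this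
    · -- interior point
      have hmem : Ioo (M + (k:ℝ) * (n:ℝ)) (M + ((k:ℝ)+1) * (n:ℝ)) ∈ nhds t :=
        Ioo_mem_nhds hlt hb2
      have hev : ∀ᶠ s in nhds t, w s = u (s + ((1 - (n:ℤ) * k : ℤ) : ℝ)) := by
        filter_upwards [hmem] with s hs
        exact hwval s k (hfloor s k hs.1.le hs.2)
      have hd := sol_shift f hper u hu (1 - (n:ℤ) * k) t
      have h2 := hd.congr_of_eventuallyEq hev
      rwa [← hwt] at h2
  · -- periodicity
    intro t
    have hfl : ⌊(t + (n:ℝ) - M) / (n:ℝ)⌋ = ⌊(t - M) / (n:ℝ)⌋ + 1 := by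
      rw [show (t + (n:ℝ) - M) / (n:ℝ) = (t - M) / (n:ℝ) + 1 by field_simp; ring]
      exact Int.floor_add_one _
    simp only [hw, hfl]
    congr 1
    push_cast
    ring
  · -- not 1-periodic
    refine ⟨τ - 1, ?_⟩
    have hfl1 : ⌊(τ - 1 - M) / (n:ℝ)⌋ = 0 := by
      apply hfloor
      · push_cast; linarith
      · push_cast; linarith
    have hw1 : w (τ - 1) = u τ := by
      rw [hwval (τ-1) 0 hfl1]
      norm_num
    have hw2 : w τ = u (τ + 1) := by
      rcases lt_or_eq_of_le hτ2 with hlt | heq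
      · have hfl2 : ⌊(τ - M) / (n:ℝ)⌋ = 0 := by
          apply hfloor
          · push_cast; linarith
          · push_cast; linarith
        rw [hwval τ 0 hfl2]
        norm_num
      · have hfl2 : ⌊(τ - M) / (n:ℝ)⌋ = 1 := by
          apply hfloor
          · push_cast; linarith
          · push_cast; linarith
        rw [hwval τ 1 hfl2]
        have h1 : τ + ((1 - (n:ℤ) * 1 : ℤ) : ℝ) = M + 1 := by push_cast; rw [heq]; ring
        have h2 : τ + 1 = M + ((n:ℝ) + 1) := by rw [heq]; ring
        rw [h1, h2, hunR M, hgM]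
    rw [show τ - 1 + 1 = τ by ring, hw1, hw2]
    exact hgτ

lemma exists_pair (f : ℝ × ℝ → ℝ)
    (u : ℝ → ℝ) (n : ℕ) (hn : 2 ≤ n)
    (hu : IsSolution f u)
    (hun : ∀ t : ℝ, u (t + ((n : ℕ) + 1 : ℕ)) = u t)
    (t0 : ℝ) (ht0 : u (t0 + 1) ≠ u t0) :
    ∃ M τ : ℝ, (u (M + 1) = u M) ∧ M + 1 ≤ τ ∧ τ ≤ M + (n : ℝ) ∧ u (τ + 1) ≠ u τ := by
  have hP : (0:ℝ) < (n:ℝ) := by exact_mod_cast (by omega : 0 < n)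
  have hP2 : (2:ℝ) ≤ (n:ℝ) := by exact_mod_cast hn
  have hunR : ∀ t : ℝ, u (t + ((n:ℝ) + 1)) = u t := by
    intro t
    have := hun t
    push_cast at this
    exact this
  have ucont : Continuous u :=
    continuous_iff_continuousAt.mpr fun t => (hu t).continuousAt
  set g : ℝ → ℝ := fun t => u (t + 1) - u t with hg
  have gcont : Continuous g := (ucont.comp (continuous_id.add continuous_const)).sub ucont
  have gt0 : g t0 ≠ 0 := sub_ne_zero.mpr ht0
  have gper : ∀ t : ℝ, g (t + ((n:ℝ) + 1)) = g t := by
    intro t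
    have h1 : t + ((n:ℝ)+1) + 1 = (t + 1) + ((n:ℝ)+1) := by ring
    simp only [hg, h1, hunR]
  have gperk : ∀ (k : ℕ) (t : ℝ), g (t + (k : ℝ) * ((n:ℝ) + 1)) = g t := by
    intro k
    induction k with
    | zero => simp
    | succ k ih =>
        intro t
        have h1 : t + ((k:ℕ)+1 : ℕ) * ((n:ℝ)+1) = (t + (k:ℝ) * ((n:ℝ)+1)) + ((n:ℝ)+1) := by
          push_cast; ring
        rw [h1, gper, ih]
  -- zero of g exists
  have hz : ∃ M : ℝ, g M = 0 := by
    by_contra h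
    push_neg at h
    have ivt : ∀ a b : ℝ, g a < 0 → 0 < g b → False := by
      intro a b ha hb
      have h0 : (0:ℝ) ∈ Set.Icc (g a) (g b) := ⟨ha.le, hb.le⟩
      obtain ⟨c, hc⟩ := intermediate_value_univ a b gcont h0
      exact h c hc
    have hsum : ∑ k ∈ Finset.range (n+1), g (k : ℝ) = 0 := by
      have hterm : ∀ k : ℕ, g (k : ℝ) = (fun j : ℕ => u (j : ℝ)) (k+1) - (fun j : ℕ => u (j : ℝ)) k := by
        intro k; simp only [hg]; push_cast; ring_nf
      calc ∑ k ∈ Finset.range (n+1), g (k:ℝ)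
          = ∑ k ∈ Finset.range (n+1), ((fun j : ℕ => u (j : ℝ)) (k+1) - (fun j : ℕ => u (j:ℝ)) k) :=
            Finset.sum_congr rfl fun k _ => hterm k
        _ = (fun j : ℕ => u (j:ℝ)) (n+1) - (fun j : ℕ => u (j:ℝ)) 0 := Finset.sum_range_sub (fun j : ℕ => u (j:ℝ)) (n+1)
        _ = 0 := by
            simp only []
            have := hun 0
            rw [zero_add] at this
            push_cast at this ⊢
            simp [this]
    rcases lt_or_gt_of_ne (h 0) with h0 | h0
    · -- g 0 < 0 : all negative
      have hall : ∀ t, g t < 0 := by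
        intro t
        rcases lt_trichotomy (g t) 0 with h' | h' | h'
        · exact h'
        · exact absurd h' (h t)
        · exact (ivt 0 t h0 h').elim
      have : ∑ k ∈ Finset.range (n+1), g (k:ℝ) < 0 :=
        Finset.sum_neg (fun k _ => hall k) (by simp)
      linarith
    · have hall : ∀ t, 0 < g t := by
        intro t
        rcases lt_trichotomy (g t) 0 with h' | h' | h'
        · exact (ivt t 0 h' h0).elim
        · exact absurd h' (h t)
        · exact h'
      have : 0 < ∑ k ∈ Finset.range (n+1), g (k:ℝ) :=
        Finset.sum_pos (fun k _ => hall k) (by simp)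
      linarith
  -- the pair (M, τ)
  by_contra hcl
  push_neg at hcl
  -- hcl : ∀ M τ, u (M+1) = u M → M + 1 ≤ τ → τ ≤ M + n → u (τ+1) = u τ
  have hcl' : ∀ M : ℝ, g M = 0 → ∀ τ : ℝ, M + 1 ≤ τ → τ ≤ M + (n:ℝ) → g τ = 0 := by
    intro M hM τ h1 h2
    have : u (M+1) = u M := by
      have := hM; simp only [hg] at this; linarith
    have := hcl M τ this h1 h2
    simp only [hg]; linarith
  obtain ⟨M0, hM0⟩ := hz
  have Q : ∀ k : ℕ, ∀ x : ℝ, M0 + 1 ≤ x → x ≤ M0 + 2 + (k:ℝ) → g x = 0 := by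
    intro k
    induction k with
    | zero =>
        intro x h1 h2
        push_cast at h2
        exact hcl' M0 hM0 x h1 (by linarith)
    | succ k ih =>
        intro x h1 h2
        push_cast at h2
        by_cases hx : x ≤ M0 + 2 + (k:ℝ)
        · exact ih x h1 hx
        · push_neg at hx
          have hgx1 : g (x - 1) = 0 := ih (x-1) (by linarith) (by linarith)
          exact hcl' (x-1) hgx1 x (by linarith) (by linarith)
  have hall : ∀ x : ℝ, M0 + 1 ≤ x → g x = 0 := by
    intro x hx
    refine Q ⌈x - (M0+2)⌉₊ x hx ?_
    have := Nat.le_ceil (x - (M0+2))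
    linarith
  have hk : M0 + 1 ≤ t0 + (⌈(M0 + 1 - t0)/((n:ℝ)+1)⌉₊ : ℝ) * ((n:ℝ)+1) := by
    have h1 := Nat.le_ceil ((M0 + 1 - t0)/((n:ℝ)+1))
    have h2 : (0:ℝ) < (n:ℝ)+1 := by linarith
    rw [div_le_iff₀ h2] at h1
    linarith
  have : g t0 = 0 := by
    rw [← gperk ⌈(M0 + 1 - t0)/((n:ℝ)+1)⌉₊ t0]
    exact hall _ hk
  exact gt0 this


lemma step_lemma (f : ℝ × ℝ → ℝ)
    (hper : ∀ t x : ℝ, f (t + 1, x) = f (t, x))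
    (u : ℝ → ℝ) (n : ℕ) (hn : 2 ≤ n)
    (hu : IsSolution f u)
    (hun : ∀ t : ℝ, u (t + ((n : ℕ) + 1 : ℕ)) = u t)
    (t0 : ℝ) (ht0 : u (t0 + 1) ≠ u t0) :
    ∃ w : ℝ → ℝ, IsSolution f w ∧ (∀ t : ℝ, w (t + (n : ℕ)) = w t) ∧
      ∃ s : ℝ, w (s + 1) ≠ w s := by
  obtain ⟨M, τ, h1, h2, h3, h4⟩ := exists_pair f u n hn hu hun t0 ht0
  have hunR : ∀ t : ℝ, u (t + ((n:ℝ) + 1)) = u t := by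
    intro t
    have := hun t
    push_cast at this
    exact this
  exact construct_w f hper u n hn hu hunR M τ h1 h2 h3 h4

theorem cancellation_lemma
    (f : ℝ × ℝ → ℝ) (hf : Continuous f)
    (hper : ∀ t x : ℝ, f (t + 1, x) = f (t, x))
    (u : ℝ → ℝ) (m : ℕ) (hm : 3 ≤ m)
    (hu : IsSolution f u)
    (hum : ∀ t : ℝ, u (t + m) = u t)
    (tstar : ℝ) (htstar : u (tstar + 1) ≠ u tstar) :
    ∃ v : ℝ → ℝ, IsSolution f v ∧ (∀ t : ℝ, v (t + 2) = v t) ∧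
      ∃ s : ℝ, v (s + 1) ≠ v s := by
  have key : ∀ n : ℕ, 2 ≤ n → ∀ u : ℝ → ℝ, IsSolution f u → (∀ t : ℝ, u (t + (n:ℕ)) = u t) →
      ∀ t0 : ℝ, u (t0 + 1) ≠ u t0 →
      ∃ v : ℝ → ℝ, IsSolution f v ∧ (∀ t : ℝ, v (t + 2) = v t) ∧ ∃ s : ℝ, v (s + 1) ≠ v s := by
    intro n hn
    induction n, hn using Nat.le_induction with
    | base =>
        intro u hu hun t0 ht0
        refine ⟨u, hu, fun t => ?_, t0, ht0⟩
        have := hun t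
        norm_num at this
        exact this
    | succ n hn ih =>
        intro u hu hun t0 ht0
        obtain ⟨w, hw, hwper, s, hs⟩ := step_lemma f hper u n hn hu hun t0 ht0
        exact ih w hw hwper s hs
  exact key m (by omega) u hu hum tstar htstar
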